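/- Define the weight function w on (0,1] by: w(x) = 1 for x > 59/96 (items of type d and larger); w(x) = 0 for x in (1/2,59/96] (c-items); w(x) = 4/7 for x in (1/3,1/2] (a- and b-items); w(x) = 1/(k+1) for x in (1/(k+2),1/(k+1)] with 2 ≤ k ≤ 18; and w(x) = 20x/19 for x ≤ 1/20. Then for any finite set of items x_1,...,x_t with x_1 + ... + x_t ≤ 1, the total weight w(x_1) + ... + w(x_t) < 1.63. -/

import Mathlib

/-- The weight function of Case 1 of the analysis of Refined Harmonic Match:
`w x = 1` for `x > 59/96`, `w x = 0` for `x ∈ (1/2, 59/96]`, `w x = 4/7` for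
`x ∈ (1/3, 1/2]`, `w x = 1/(k+1)` for `x ∈ (1/(k+2), 1/(k+1)]` with `2 ≤ k ≤ 18`
(equivalently `w x = 1/⌊1/x⌋` for `x ∈ (1/20, 1/3]`), and `w x = 20x/19` for
`x ≤ 1/20`. -/
noncomputable def wCase1 (x : ℝ) : ℝ :=
  if 59 / 96 < x then 1
  else if 1 / 2 < x then 0
  else if 1 / 3 < x then 4 / 7
  else if 1 / 20 < x then 1 / (⌊1 / x⌋ : ℝ)
  else 20 * x / 19

lemma wCase1_le_third {x : ℝ} (h0 : 0 < x) (h : x ≤ 1/3) : wCase1 x ≤ 4/3 * x := by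
  unfold wCase1
  rw [if_neg (by linarith : ¬ (59:ℝ)/96 < x), if_neg (by linarith : ¬ (1:ℝ)/2 < x),
    if_neg (by linarith : ¬ (1:ℝ)/3 < x)]
  split_ifs with h4
  · have h3n : (3:ℤ) ≤ ⌊1/x⌋ := Int.le_floor.mpr (by
      push_cast
      rw [le_div_iff₀ h0]; linarith)
    have h3nR : (3:ℝ) ≤ (⌊1/x⌋:ℝ) := by exact_mod_cast h3n
    have hnpos : (0:ℝ) < (⌊1/x⌋:ℝ) := by linarith
    have hub : 1/x < (⌊1/x⌋:ℝ) + 1 := Int.lt_floor_add_one (1/x)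
    have hx_lb : 1 < ((⌊1/x⌋:ℝ) + 1) * x := by
      have := (div_lt_iff₀ h0).mp hub
      linarith
    rw [div_le_iff₀ hnpos]
    nlinarith [mul_nonneg h0.le (by linarith : (0:ℝ) ≤ (⌊1/x⌋:ℝ) - 3)]
  · linarith

lemma wCase1_le_small {x : ℝ} (h0 : 0 < x) (h : x ≤ 5/96) : wCase1 x ≤ 20/19 * x := by
  unfold wCase1
  rw [if_neg (by linarith : ¬ (59:ℝ)/96 < x), if_neg (by linarith : ¬ (1:ℝ)/2 < x),
    if_neg (by linarith : ¬ (1:ℝ)/3 < x)]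
  split_ifs with h4
  · have h19 : (19:ℤ) ≤ ⌊1/x⌋ := Int.le_floor.mpr (by
      push_cast
      rw [le_div_iff₀ h0]; linarith)
    have h19R : (19:ℝ) ≤ (⌊1/x⌋:ℝ) := by exact_mod_cast h19
    have hle : 1 / (⌊1/x⌋:ℝ) ≤ 1/19 :=
      one_div_le_one_div_of_le (by norm_num) h19R
    linarith
  · linarith

lemma wCase1_le_ab {x : ℝ} (h0 : 0 < x) (h : x ≤ 59/96) : wCase1 x ≤ 4/7 := by
  by_cases h3 : 1/3 < x
  · unfold wCase1
    rw [if_neg (by linarith : ¬ (59:ℝ)/96 < x)]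
    split_ifs with h2
    · norm_num
    · norm_num
  · have := wCase1_le_third h0 (le_of_not_gt h3)
    linarith

lemma wCase1_le_one' {x : ℝ} (h0 : 0 < x) (h1 : x ≤ 1) : wCase1 x ≤ 1 := by
  by_cases hd : 59/96 < x
  · unfold wCase1; rw [if_pos hd]
  · have := wCase1_le_ab h0 (le_of_not_gt hd)
    linarith

lemma sum_w_le (l : List ℝ) (c : ℝ) (h : ∀ x ∈ l, wCase1 x ≤ c * x) :
    (l.map wCase1).sum ≤ c * l.sum := by
  induction l with
  | nil => simp
  | cons a t ih =>
    simp only [List.map_cons, List.sum_cons, mul_add]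
    exact add_le_add (h a (by simp)) (ih fun x hx => h x (by simp [hx]))

lemma mem_le_sum {l : List ℝ} (hpos : ∀ x ∈ l, 0 < x) {y : ℝ} (hy : y ∈ l) :
    y ≤ l.sum := by
  induction l with
  | nil => simp at hy
  | cons a t ih =>
    rcases List.mem_cons.mp hy with rfl | hy'
    · have : 0 ≤ t.sum := List.sum_nonneg fun x hx => (hpos x (by simp [hx])).le
      simp only [List.sum_cons]; linarith
    · have := ih (fun x hx => hpos x (by simp [hx])) hy'
      have ha := hpos a (by simp)
      simp only [List.sum_cons]; linarith

/-- Any set of items from (0,1] that fits in a single bin has total Case-1 weight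
less than 1.63. -/

theorem case1_weight_bound (l : List ℝ)
    (h : ∀ x ∈ l, 0 < x ∧ x ≤ 1) (hsum : l.sum ≤ 1) :
    (l.map wCase1).sum < 1.63 := by
  by_cases hd : ∃ x ∈ l, 59/96 < x
  · -- a d-item exists: weight 1, remainder ≤ 37/96
    obtain ⟨x, hxl, hxd⟩ := hd
    set l' := l.erase x with hl'
    have p : l.Perm (x :: l') := List.perm_cons_erase hxl
    have hsum' : l.sum = x + l'.sum := by rw [p.sum_eq]; simp
    have hmem' : ∀ y ∈ l', 0 < y ∧ y ≤ 1 := fun y hy => h y (List.erase_subset hy)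
    have hmap : (l.map wCase1).sum = wCase1 x + (l'.map wCase1).sum := by
      rw [(p.map wCase1).sum_eq]; simp
    have hl'nonneg : 0 ≤ l'.sum := List.sum_nonneg fun y hy => (hmem' y hy).1.le
    have hwx : wCase1 x = 1 := by unfold wCase1; rw [if_pos hxd]
    have hrem : l'.sum ≤ 37/96 := by linarith [hsum' ▸ hsum]
    by_cases hab : ∃ y ∈ l', 1/3 < y
    · obtain ⟨y, hyl, hy3⟩ := hab
      set l'' := l'.erase y with hl''
      have p2 : l'.Perm (y :: l'') := List.perm_cons_erase hyl
      have hsum'' : l'.sum = y + l''.sum := by rw [p2.sum_eq]; simp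
      have hmem'' : ∀ z ∈ l'', 0 < z ∧ z ≤ 1 := fun z hz => hmem' z (List.erase_subset hz)
      have hmap2 : (l'.map wCase1).sum = wCase1 y + (l''.map wCase1).sum := by
        rw [(p2.map wCase1).sum_eq]; simp
      have hl''nonneg : 0 ≤ l''.sum := List.sum_nonneg fun z hz => (hmem'' z hz).1.le
      have hy59 : y ≤ 59/96 := by linarith
      have hwy := wCase1_le_ab (hmem' y hyl).1 hy59
      have hrem2 : l''.sum ≤ 5/96 := by linarith
      have hsmall : ∀ z ∈ l'', wCase1 z ≤ 20/19 * z := by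
        intro z hz
        have hzle : z ≤ l''.sum := mem_le_sum (fun u hu => (hmem'' u hu).1) hz
        exact wCase1_le_small (hmem'' z hz).1 (by linarith)
      have h1 : (l''.map wCase1).sum ≤ 20/19 * l''.sum := sum_w_le l'' _ hsmall
      rw [hmap, hmap2, hwx]
      norm_num at hwy ⊢
      linarith
    · push_neg at hab
      have hsmall : ∀ y ∈ l', wCase1 y ≤ 4/3 * y := fun y hy =>
        wCase1_le_third (hmem' y hy).1 (hab y hy)
      have h1 := sum_w_le l' (4/3) hsmall
      rw [hmap, hwx]
      norm_num at h1 ⊢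
      linarith
  · push_neg at hd
    by_cases hbig : ∃ x ∈ l, 1/3 < x
    · obtain ⟨x, hxl, hx3⟩ := hbig
      set l' := l.erase x with hl'
      have p : l.Perm (x :: l') := List.perm_cons_erase hxl
      have hsum' : l.sum = x + l'.sum := by rw [p.sum_eq]; simp
      have hmem' : ∀ y ∈ l', 0 < y ∧ y ≤ 1 := fun y hy => h y (List.erase_subset hy)
      have hmap : (l.map wCase1).sum = wCase1 x + (l'.map wCase1).sum := by
        rw [(p.map wCase1).sum_eq]; simp
      have hl'nonneg : 0 ≤ l'.sum := List.sum_nonneg fun y hy => (hmem' y hy).1.le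
      have hwx := wCase1_le_ab (h x hxl).1 (hd x hxl)
      by_cases hab : ∃ y ∈ l', 1/3 < y
      · obtain ⟨y, hyl, hy3⟩ := hab
        set l'' := l'.erase y with hl''
        have p2 : l'.Perm (y :: l'') := List.perm_cons_erase hyl
        have hsum'' : l'.sum = y + l''.sum := by rw [p2.sum_eq]; simp
        have hmem'' : ∀ z ∈ l'', 0 < z ∧ z ≤ 1 := fun z hz => hmem' z (List.erase_subset hz)
        have hmap2 : (l'.map wCase1).sum = wCase1 y + (l''.map wCase1).sum := by
          rw [(p2.map wCase1).sum_eq]; simp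
        have hl''nonneg : 0 ≤ l''.sum := List.sum_nonneg fun z hz => (hmem'' z hz).1.le
        have hwy := wCase1_le_ab (hmem' y hyl).1 (hd y (List.erase_subset hyl))
        have hrem2 : l''.sum ≤ 1/3 := by linarith
        have hsmall : ∀ z ∈ l'', wCase1 z ≤ 4/3 * z := by
          intro z hz
          have hzle : z ≤ l''.sum := mem_le_sum (fun u hu => (hmem'' u hu).1) hz
          exact wCase1_le_third (hmem'' z hz).1 (by linarith)
        have h1 := sum_w_le l'' (4/3) hsmall
        rw [hmap, hmap2]
        norm_num at h1 hwx hwy ⊢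
        linarith
      · push_neg at hab
        have hsmall : ∀ y ∈ l', wCase1 y ≤ 4/3 * y := fun y hy =>
          wCase1_le_third (hmem' y hy).1 (hab y hy)
        have h1 := sum_w_le l' (4/3) hsmall
        rw [hmap]
        have hrem : l'.sum ≤ 2/3 := by linarith
        norm_num at h1 hwx ⊢
        linarith
    · push_neg at hbig
      have hsmall : ∀ y ∈ l, wCase1 y ≤ 4/3 * y := fun y hy =>
        wCase1_le_third (h y hy).1 (hbig y hy)
      have h1 := sum_w_le l (4/3) hsmall
      norm_num at h1 ⊢
      linarith
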